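/- Let b : R → (−1,1) be increasing and L-Lipschitz, K > 0, and define for distinct indices i, j ∈ {1,…,N} and s ∈ [−1,1] the map E(x) = x + K(s − b(x^i − x^j))(e_i − e_j), where e_i is the i-th standard basis vector. Then for all x, y ∈ R^N: ‖E(x) − E(y)‖² − ‖x − y‖² ≤ −2K(1 − KL)·|x^i − x^j − y^i + y^j|·|b(x^i − x^j) − b(y^i − y^j)|. -/

import Mathlib

theorem stmt_2 (N : ℕ) (hN : 2 ≤ N) (i j : Fin N) (hij : i ≠ j)
    (s : ℝ) (hs : s ∈ Set.Icc (-1 : ℝ) 1)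
    (b : ℝ → ℝ) (hb_mono : StrictMono b)
    (hb_range : ∀ u, b u ∈ Set.Ioo (-1 : ℝ) 1)
    (L : ℝ) (hL : 0 ≤ L) (hb_lip : ∀ u v, |b u - b v| ≤ L * |u - v|)
    (K : ℝ) (hK : 0 < K)
    (E : EuclideanSpace ℝ (Fin N) → EuclideanSpace ℝ (Fin N))
    (hE : ∀ x, E x = x + (K * (s - b (x i - x j))) •
      (EuclideanSpace.single i (1 : ℝ) - EuclideanSpace.single j (1 : ℝ))) :
    ∀ x y : EuclideanSpace ℝ (Fin N),
      ‖E x - E y‖ ^ 2 - ‖x - y‖ ^ 2 ≤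
        -2 * K * (1 - K * L) * |x i - x j - y i + y j| *
          |b (x i - x j) - b (y i - y j)| := by
  intro x y
  set w : EuclideanSpace ℝ (Fin N) :=
    EuclideanSpace.single i (1 : ℝ) - EuclideanSpace.single j (1 : ℝ) with hw
  set u : ℝ := x i - x j with hu
  set v : ℝ := y i - y j with hv
  set c : ℝ := -(K * (b u - b v)) with hc
  have hEd : E x - E y = (x - y) + c • w := by
    rw [hE x, hE y, hc]
    module
  have hinner_w : ∀ z : EuclideanSpace ℝ (Fin N),
      (inner ℝ z w : ℝ) = z i - z j := by
    intro z
    simp [hw, inner_sub_right, real_inner_comm, EuclideanSpace.inner_single_left, EuclideanSpace.inner_single_right]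
  have hww : (inner ℝ w w : ℝ) = 2 := by
    rw [hinner_w w]
    simp [hw, EuclideanSpace.single_apply, hij, hij.symm]
    norm_num
  have hxyw : (inner ℝ (x - y) w : ℝ) = u - v := by
    rw [hinner_w]
    simp [hu, hv]
    ring
  have hnorm : ‖E x - E y‖ ^ 2 = ‖x - y‖ ^ 2 + 2 * (c * (u - v)) + c ^ 2 * 2 := by
    rw [hEd, @norm_add_sq_real, real_inner_smul_right, hxyw, norm_smul]
    have : ‖w‖ ^ 2 = 2 := by
      rw [← real_inner_self_eq_norm_sq, hww]
    rw [mul_pow, this, Real.norm_eq_abs, sq_abs]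
  rw [hnorm]
  have hsign : (b u - b v) * (u - v) = |b u - b v| * |u - v| := by
    rcases lt_trichotomy u v with h | h | h
    · have hb := hb_mono h
      rw [abs_of_nonpos (by linarith), abs_of_nonpos (by linarith)]
      ring
    · simp [h]
    · have hb := hb_mono h
      rw [abs_of_nonneg (by linarith), abs_of_nonneg (by linarith)]
  have hBA : |b u - b v| ≤ L * |u - v| := hb_lip u v
  have hB : 0 ≤ |b u - b v| := abs_nonneg _
  have hA : 0 ≤ |u - v| := abs_nonneg _
  have habs : |x i - x j - y i + y j| = |u - v| := by
    congr 1; rw [hu, hv]; ring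
  rw [habs]
  have hsq : c ^ 2 = K ^ 2 * (b u - b v) ^ 2 := by rw [hc]; ring
  have hsq2 : (b u - b v) ^ 2 = |b u - b v| ^ 2 := (sq_abs _).symm
  have hcuv : c * (u - v) = -(K * (|b u - b v| * |u - v|)) := by
    rw [hc, ← hsign]; ring
  have h1 : |b u - b v| * |b u - b v| ≤ (L * |u - v|) * |b u - b v| :=
    mul_le_mul_of_nonneg_right hBA hB
  have hcc : c ^ 2 ≤ K ^ 2 * ((L * |u - v|) * |b u - b v|) := by
    rw [hsq, hsq2]
    nlinarith [h1, sq_nonneg K]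
  nlinarith [hcc, hcuv]
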